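/- Let λ ∈ ℂ^∞ = ℕ → ℂ. The evaluation functional f ↦ f(λ) on polynomials in the variables z_1, z_2, … is bounded with respect to the H²(𝕋^∞) norm — i.e. there is C > 0 with |f(λ)| ≤ C ‖f‖ for every polynomial f — if and only if |λ_j| < 1 for every j and ∑_{j=1}^∞ |λ_j|² < ∞. -/

import Mathlib

open Finset
open scoped BigOperators

/-- The `H²(𝕋^∞)` norm of a polynomial: `‖f‖ = (∑_κ |f_κ|²)^{1/2}`. -/
noncomputable def h2Norm (f : MvPolynomial ℕ ℂ) : ℝ :=
  Real.sqrt (∑ κ ∈ f.support, ‖MvPolynomial.coeff κ f‖ ^ 2)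


lemma geom_aux (x : ℝ) (h0 : 0 ≤ x) (h1 : x < 1) (n : ℕ) :
    ∑ i ∈ range n, x ^ i ≤ (1 - x)⁻¹ := by
  have hxn : (0:ℝ) ≤ x ^ n := pow_nonneg h0 n
  have h2 : (0:ℝ) < 1 - x := by linarith
  rw [geom_sum_eq h1.ne n]
  have : (x ^ n - 1) / (x - 1) = (1 - x ^ n) / (1 - x) := by
    rw [← neg_div_neg_eq]; ring_nf
  rw [this, div_le_iff₀ h2, inv_mul_cancel₀ h2.ne']
  linarith

lemma coeff_sum_monomial {α : Type*} (t : Finset α) (m : α → (ℕ →₀ ℕ)) (c : α → ℂ)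
    (hm : Set.InjOn m t) {a : α} (ha : a ∈ t) :
    MvPolynomial.coeff (m a) (∑ b ∈ t, MvPolynomial.monomial (m b) (c b)) = c a := by
  rw [MvPolynomial.coeff_sum]
  rw [Finset.sum_eq_single a]
  · simp [MvPolynomial.coeff_monomial]
  · intro b hb hba
    rw [MvPolynomial.coeff_monomial, if_neg]
    intro h
    exact hba (hm hb ha h)
  · intro h; exact absurd ha h

lemma h2Norm_sum_monomial_le {α : Type*} (t : Finset α) (m : α → (ℕ →₀ ℕ)) (c : α → ℂ)
    (hm : Set.InjOn m t) :
    h2Norm (∑ a ∈ t, MvPolynomial.monomial (m a) (c a)) ≤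
      Real.sqrt (∑ a ∈ t, ‖c a‖ ^ 2) := by
  set f := ∑ a ∈ t, MvPolynomial.monomial (m a) (c a) with hf
  apply Real.sqrt_le_sqrt
  have hsub : f.support ⊆ t.image m := by
    intro κ hκ
    rw [MvPolynomial.mem_support_iff] at hκ
    by_contra hκ'
    apply hκ
    rw [hf, MvPolynomial.coeff_sum]
    apply Finset.sum_eq_zero
    intro b hb
    rw [MvPolynomial.coeff_monomial, if_neg]
    intro h
    exact hκ' (Finset.mem_image.2 ⟨b, hb, h⟩)
  calc ∑ κ ∈ f.support, ‖MvPolynomial.coeff κ f‖ ^ 2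
      ≤ ∑ κ ∈ t.image m, ‖MvPolynomial.coeff κ f‖ ^ 2 :=
        Finset.sum_le_sum_of_subset_of_nonneg hsub (fun _ _ _ => by positivity)
    _ = ∑ a ∈ t, ‖MvPolynomial.coeff (m a) f‖ ^ 2 :=
        Finset.sum_image (fun x hx y hy h => hm hx hy h)
    _ = ∑ a ∈ t, ‖c a‖ ^ 2 := by
        apply Finset.sum_congr rfl
        intro a ha
        rw [coeff_sum_monomial t m c hm ha]

lemma sq_le_of_le_mul_sqrt {S C : ℝ} (hS : 0 ≤ S) (h : S ≤ C * Real.sqrt S) :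
    S ≤ C ^ 2 := by
  have h1 : Real.sqrt S ^ 2 = S := Real.sq_sqrt hS
  have h2 : 0 ≤ Real.sqrt S := Real.sqrt_nonneg S
  nlinarith [sq_nonneg (C - Real.sqrt S)]

lemma summable_neg_log (x : ℕ → ℝ) (hx0 : ∀ j, 0 ≤ x j) (hx1 : ∀ j, x j < 1)
    (hs : Summable x) : Summable fun j => -Real.log (1 - x j) := by
  have hpos : ∀ j, (0:ℝ) < 1 - x j := fun j => by linarith [hx1 j]
  have hg0 : ∀ j, 0 ≤ -Real.log (1 - x j) := fun j => by
    rw [neg_nonneg]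
    exact Real.log_nonpos (by linarith [hx1 j]) (by linarith [hx0 j])
  have hfin : {j | ¬ x j < 1/2}.Finite := by
    have h := hs.tendsto_cofinite_zero
    have h2 : ∀ᶠ j in Filter.cofinite, x j < 1/2 :=
      h.eventually_lt_const (by norm_num)
    exact Filter.eventually_cofinite.mp h2
  set F : Finset ℕ := hfin.toFinset with hF
  have hsum : Summable (fun j => 2 * x j + if j ∈ F then -Real.log (1 - x j) else 0) := by
    apply Summable.add (hs.mul_left 2)
    apply summable_of_ne_finset_zero (s := F)
    intro j hj
    exact if_neg hj
  apply Summable.of_nonneg_of_le hg0 _ hsum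
  intro j
  by_cases hj : j ∈ F
  · rw [if_pos hj]
    linarith [hx0 j]
  · rw [if_neg hj, add_zero]
    have hxj : x j < 1/2 := by
      by_contra hc
      exact hj (hfin.mem_toFinset.2 hc)
    have hlog := Real.log_le_sub_one_of_pos (inv_pos.2 (hpos j))
    rw [← Real.log_inv]
    have hinv : (1 - x j)⁻¹ ≤ 1 + 2 * x j := by
      rw [inv_eq_one_div, div_le_iff₀ (hpos j)]
      nlinarith [hx0 j]
    linarith

set_option maxHeartbeats 1000000 in
lemma key_bound (x : ℕ → ℝ) (hx0 : ∀ j, 0 ≤ x j) (hx1 : ∀ j, x j < 1)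
    (hg : Summable fun j => -Real.log (1 - x j)) (s : Finset (ℕ →₀ ℕ)) :
    ∑ κ ∈ s, ∏ j ∈ κ.support, x j ^ κ j ≤
      Real.exp (∑' j, -Real.log (1 - x j)) := by
  set g : ℕ → ℝ := fun j => -Real.log (1 - x j) with hgdef
  have hpos : ∀ j, (0:ℝ) < 1 - x j := fun j => by linarith [hx1 j]
  have hg0 : ∀ j, 0 ≤ g j := fun j => by
    simp only [hgdef, neg_nonneg]
    exact Real.log_nonpos (by linarith [hx1 j]) (by linarith [hx0 j])
  set N : ℕ := (s.sup fun κ => κ.support.sup id) + 1 with hN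
  set D : ℕ := s.sup fun κ => κ.support.sup κ with hD
  have hsupp : ∀ κ ∈ s, κ.support ⊆ range N := by
    intro κ hκ j hj
    rw [Finset.mem_range, hN, Nat.lt_succ_iff]
    calc j = id j := rfl
      _ ≤ κ.support.sup id := Finset.le_sup hj
      _ ≤ s.sup fun κ => κ.support.sup id := Finset.le_sup (f := fun κ => κ.support.sup id) hκ
  have hval : ∀ κ ∈ s, ∀ j, κ j ≤ D := by
    intro κ hκ j
    by_cases hj : j ∈ κ.support
    · calc κ j ≤ κ.support.sup κ := Finset.le_sup hj
        _ ≤ D := Finset.le_sup (f := fun κ => κ.support.sup κ) hκ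
    · rw [Finsupp.notMem_support_iff] at hj
      simp [hj]
  -- φ : injection into Fin N → Fin (D+1)
  set φ : (ℕ →₀ ℕ) → (Fin N → Fin (D + 1)) :=
    fun κ i => ⟨min (κ i) D, Nat.lt_succ_of_le (min_le_right _ _)⟩ with hφ
  have hinj : Set.InjOn φ s := by
    intro κ hκ κ' hκ' h
    ext j
    by_cases hjN : j < N
    · have := congrFun h ⟨j, hjN⟩
      have h1 : min (κ j) D = min (κ' j) D := congrArg Fin.val this
      rwa [min_eq_left (hval κ hκ j), min_eq_left (hval κ' hκ' j)] at h1
    · have e1 : κ j = 0 := by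
        rw [← Finsupp.notMem_support_iff]
        intro hc
        exact hjN (Finset.mem_range.1 (hsupp κ hκ hc))
      have e2 : κ' j = 0 := by
        rw [← Finsupp.notMem_support_iff]
        intro hc
        exact hjN (Finset.mem_range.1 (hsupp κ' hκ' hc))
      rw [e1, e2]
  have step1 : ∀ κ ∈ s, ∏ j ∈ κ.support, x j ^ κ j = ∏ i : Fin N, x i ^ κ i := by
    intro κ hκ
    rw [Fin.prod_univ_eq_prod_range (fun i => x i ^ κ i) N]
    apply Finset.prod_subset (hsupp κ hκ)
    intro j _ hj
    rw [Finsupp.notMem_support_iff] at hj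
    simp [hj]
  calc ∑ κ ∈ s, ∏ j ∈ κ.support, x j ^ κ j
      = ∑ κ ∈ s, ∏ i : Fin N, x i ^ ((φ κ i : ℕ)) := by
        apply Finset.sum_congr rfl
        intro κ hκ
        rw [step1 κ hκ]
        apply Finset.prod_congr rfl
        intro i _
        simp only [hφ, min_eq_left (hval κ hκ i)]
    _ = ∑ v ∈ s.image φ, ∏ i : Fin N, x i ^ (v i : ℕ) :=
        (Finset.sum_image (f := fun v : Fin N → Fin (D + 1) => ∏ i : Fin N, x (i : ℕ) ^ (v i : ℕ))
          (fun a ha b hb h => hinj ha hb h)).symm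
    _ ≤ ∑ v : Fin N → Fin (D + 1), ∏ i : Fin N, x i ^ (v i : ℕ) := by
        apply Finset.sum_le_sum_of_subset_of_nonneg (Finset.subset_univ _)
        intro v _ _
        exact Finset.prod_nonneg fun i _ => pow_nonneg (hx0 i) _
    _ = ∏ i : Fin N, ∑ k : Fin (D + 1), x i ^ (k : ℕ) := by
        rw [Finset.prod_univ_sum]
        rw [Fintype.piFinset_univ]
    _ ≤ ∏ i : Fin N, Real.exp (g i) := by
        apply Finset.prod_le_prod
        · intro i _
          exact Finset.sum_nonneg fun k _ => pow_nonneg (hx0 i) _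
        · intro i _
          rw [Fin.sum_univ_eq_sum_range (fun k => x i ^ k) (D + 1)]
          refine (geom_aux (x i) (hx0 i) (hx1 i) (D + 1)).trans (le_of_eq ?_)
          rw [hgdef]
          rw [Real.exp_neg, Real.exp_log (hpos i)]
    _ = Real.exp (∑ i : Fin N, g i) := (Real.exp_sum _ _).symm
    _ ≤ Real.exp (∑' j, g j) := by
        apply Real.exp_le_exp.2
        rw [Fin.sum_univ_eq_sum_range g N]
        exact Summable.sum_le_tsum (range N) (fun i _ => hg0 i) hg

theorem stmt15 (lam : ℕ → ℂ) :
    (∃ C > 0, ∀ f : MvPolynomial ℕ ℂ,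
        ‖MvPolynomial.eval lam f‖ ≤ C * h2Norm f) ↔
      ((∀ j, ‖lam j‖ < 1) ∧ Summable fun j => ‖lam j‖ ^ 2) := by
  constructor
  · rintro ⟨C, hC, hbd⟩
    constructor
    · intro j
      by_contra hx
      push_neg at hx
      set N : ℕ := ⌈C ^ 2⌉₊ + 1 with hN
      set S : ℝ := ∑ k ∈ range N, Complex.normSq (lam j) ^ k with hSdef
      have hS0 : 0 ≤ S := Finset.sum_nonneg fun k _ => pow_nonneg (Complex.normSq_nonneg _) k
      set f : MvPolynomial ℕ ℂ := ∑ k ∈ range N,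
        MvPolynomial.monomial (Finsupp.single j k) ((starRingEnd ℂ) (lam j) ^ k) with hfdef
      have heval : MvPolynomial.eval lam f = (S : ℂ) := by
        rw [hfdef, map_sum, hSdef]
        push_cast
        apply Finset.sum_congr rfl
        intro k _
        rw [MvPolynomial.eval_monomial, Finsupp.prod_single_index (by simp)]
        rw [← mul_pow, mul_comm, Complex.mul_conj]
      have habs : ‖MvPolynomial.eval lam f‖ = S := by
        rw [heval, Complex.norm_real, Real.norm_eq_abs, abs_of_nonneg hS0]
      have hnorm : h2Norm f ≤ Real.sqrt S := by
        have := h2Norm_sum_monomial_le (range N) (fun k => Finsupp.single j k)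
          (fun k => (starRingEnd ℂ) (lam j) ^ k) ((Finsupp.single_injective j).injOn)
        rw [hfdef]
        refine this.trans (le_of_eq ?_)
        congr 1
        apply Finset.sum_congr rfl
        intro k _
        rw [norm_pow, Complex.norm_conj, ← pow_mul, mul_comm k 2, pow_mul, Complex.sq_norm]
      have h1 : S ≤ C * Real.sqrt S := by
        have := (hbd f).trans (mul_le_mul_of_nonneg_left hnorm hC.le)
        rwa [habs] at this
      have h2 : S ≤ C ^ 2 := sq_le_of_le_mul_sqrt hS0 h1
      have h3 : (N : ℝ) ≤ S := by
        calc (N : ℝ) = ∑ k ∈ range N, (1:ℝ) := by simp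
          _ ≤ S := Finset.sum_le_sum fun k _ => one_le_pow₀ (by
              rw [← Complex.sq_norm]; nlinarith)
      have h4 : C ^ 2 < (N : ℝ) := by
        have := Nat.le_ceil (C ^ 2)
        push_cast [hN]
        linarith
      linarith
    · apply summable_of_sum_range_le (fun j => sq_nonneg _)
      intro N
      set S : ℝ := ∑ j ∈ range N, ‖lam j‖ ^ 2 with hSdef
      have hS0 : 0 ≤ S := Finset.sum_nonneg fun k _ => sq_nonneg _
      set f : MvPolynomial ℕ ℂ := ∑ j ∈ range N,
        MvPolynomial.monomial (Finsupp.single j 1) ((starRingEnd ℂ) (lam j)) with hfdef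
      have heval : MvPolynomial.eval lam f = (S : ℂ) := by
        rw [hfdef, map_sum, hSdef]
        push_cast
        apply Finset.sum_congr rfl
        intro k _
        rw [MvPolynomial.eval_monomial, Finsupp.prod_single_index (by simp)]
        rw [pow_one, mul_comm, Complex.mul_conj, ← Complex.sq_norm]
        push_cast
        ring
      have habs : ‖MvPolynomial.eval lam f‖ = S := by
        rw [heval, Complex.norm_real, Real.norm_eq_abs, abs_of_nonneg hS0]
      have hnorm : h2Norm f ≤ Real.sqrt S := by
        have := h2Norm_sum_monomial_le (range N) (fun j => Finsupp.single j 1)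
          (fun j => (starRingEnd ℂ) (lam j)) ((Finsupp.single_left_injective one_ne_zero).injOn)
        rw [hfdef]
        refine this.trans (le_of_eq ?_)
        congr 1
        apply Finset.sum_congr rfl
        intro k _
        rw [Complex.norm_conj]
      have h1 : S ≤ C * Real.sqrt S := by
        have := (hbd f).trans (mul_le_mul_of_nonneg_left hnorm hC.le)
        rwa [habs] at this
      exact sq_le_of_le_mul_sqrt hS0 h1
  · rintro ⟨h1, h2⟩
    set x : ℕ → ℝ := fun j => ‖lam j‖ ^ 2 with hxdef
    have hx0 : ∀ j, 0 ≤ x j := fun j => sq_nonneg _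
    have hx1 : ∀ j, x j < 1 := fun j =>
      pow_lt_one₀ (norm_nonneg _) (h1 j) two_ne_zero
    have hg := summable_neg_log x hx0 hx1 h2
    set T : ℝ := ∑' j, -Real.log (1 - x j) with hT
    refine ⟨Real.sqrt (Real.exp T), Real.sqrt_pos.2 (Real.exp_pos T), fun f => ?_⟩
    set a : (ℕ →₀ ℕ) → ℝ := fun d => ‖MvPolynomial.coeff d f‖ with ha
    set b : (ℕ →₀ ℕ) → ℝ := fun d => ‖∏ i ∈ d.support, lam i ^ d i‖ with hb
    have ha0 : ∀ d, 0 ≤ a d := fun d => norm_nonneg _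
    have hb0 : ∀ d, 0 ≤ b d := fun d => norm_nonneg _
    set A : ℝ := ∑ d ∈ f.support, a d ^ 2 with hA
    set B : ℝ := ∑ d ∈ f.support, b d ^ 2 with hB
    have hA0 : 0 ≤ A := Finset.sum_nonneg fun d _ => sq_nonneg _
    have hB0 : 0 ≤ B := Finset.sum_nonneg fun d _ => sq_nonneg _
    have step1 : ‖MvPolynomial.eval lam f‖ ≤ ∑ d ∈ f.support, a d * b d := by
      rw [MvPolynomial.eval_eq]
      refine (norm_sum_le _ _).trans (le_of_eq ?_)
      apply Finset.sum_congr rfl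
      intro d _
      rw [norm_mul]
    have hcs : (∑ d ∈ f.support, a d * b d) ^ 2 ≤ A * B :=
      Finset.sum_mul_sq_le_sq_mul_sq f.support a b
    have step2 : ∑ d ∈ f.support, a d * b d ≤ Real.sqrt A * Real.sqrt B := by
      rw [← Real.sqrt_mul hA0]
      exact (Real.le_sqrt (Finset.sum_nonneg fun d _ => mul_nonneg (ha0 d) (hb0 d))
        (mul_nonneg hA0 hB0)).2 hcs
    have hBkey : B ≤ Real.exp T := by
      have : B = ∑ d ∈ f.support, ∏ j ∈ d.support, x j ^ d j := by
        apply Finset.sum_congr rfl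
        intro d _
        simp only [hb]
        rw [norm_prod, ← Finset.prod_pow]
        apply Finset.prod_congr rfl
        intro i _
        rw [norm_pow, ← pow_mul, mul_comm (d i) 2, pow_mul]
      rw [this, hT]
      exact key_bound x hx0 hx1 hg f.support
    have step3 : Real.sqrt B ≤ Real.sqrt (Real.exp T) := Real.sqrt_le_sqrt hBkey
    have hnorm : h2Norm f = Real.sqrt A := rfl
    calc ‖MvPolynomial.eval lam f‖
        ≤ ∑ d ∈ f.support, a d * b d := step1
      _ ≤ Real.sqrt A * Real.sqrt B := step2
      _ ≤ Real.sqrt A * Real.sqrt (Real.exp T) :=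
          mul_le_mul_of_nonneg_left step3 (Real.sqrt_nonneg A)
      _ = Real.sqrt (Real.exp T) * h2Norm f := by rw [hnorm, mul_comm]
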